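/- arXiv:2211.02974 — 12 statements merged into one kernel-verified Lean document; each statement's English description precedes it below -/
import Mathlib

section
/- Let (B,S) be an S5-subordination algebra. The set of round ideals of (B,S), ordered by inclusion, is closed under finite intersections and arbitrary joins in the frame of ideals of B; in particular, the intersection of two round ideals is a round ideal, and the ideal generated by a union of round ideals is a round ideal. -/
open Set

/-- Image of a set under a relation: `S[X] = {b | ∃ x ∈ X, x S b}`. -/
def relImg {B₁ B₂ : Type*} (S : B₁ → B₂ → Prop) (X : Set B₁) : Set B₂ :=
  {b | ∃ x ∈ X, S x b}

/-- Preimage of a set under a relation: `S⁻¹[X] = {a | ∃ x ∈ X, a S x}`. -/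
def relPre {B₁ B₂ : Type*} (S : B₁ → B₂ → Prop) (X : Set B₂) : Set B₁ :=
  {a | ∃ x ∈ X, S a x}

/-- Relation composition: `a (T₂ ∘ T₁) c` iff `∃ b, a T₁ b ∧ b T₂ c`. -/
def relComp {B₁ B₂ B₃ : Type*} (T₂ : B₂ → B₃ → Prop) (T₁ : B₁ → B₂ → Prop) :
    B₁ → B₃ → Prop :=
  fun a c => ∃ b, T₁ a b ∧ T₂ b c

/-- Pointwise complement of a set: `¬X = {¬x | x ∈ X}`. -/
def complSet {B : Type*} [BooleanAlgebra B] (X : Set B) : Set B := (·ᶜ) '' X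

/-- A subordination between boolean algebras (axioms S1–S4). -/
structure IsSubord {B₁ B₂ : Type*} [BooleanAlgebra B₁] [BooleanAlgebra B₂]
    (T : B₁ → B₂ → Prop) : Prop where
  rel_bot : T ⊥ ⊥
  rel_top : T ⊤ ⊤
  sup_left : ∀ a b c, T a c → T b c → T (a ⊔ b) c
  inf_right : ∀ a c d, T a c → T a d → T a (c ⊓ d)
  mono : ∀ a b c d, a ≤ b → T b c → c ≤ d → T a d

/-- An S5-subordination on a boolean algebra (axioms S1–S7). -/
structure IsS5Sub {B : Type*} [BooleanAlgebra B] (S : B → B → Prop)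
    extends IsSubord S : Prop where
  le_of_rel : ∀ a b, S a b → a ≤ b
  compl_rel : ∀ a b, S a b → S bᶜ aᶜ
  dense : ∀ a b, S a b → ∃ c, S a c ∧ S c b

/-- A compatible subordination between S5-subordination algebras. -/
def IsCompat {B₁ B₂ : Type*} [BooleanAlgebra B₁] [BooleanAlgebra B₂]
    (S₁ : B₁ → B₁ → Prop) (S₂ : B₂ → B₂ → Prop) (T : B₁ → B₂ → Prop) : Prop :=
  IsSubord T ∧ relComp S₂ T = T ∧ relComp T S₁ = T

/-- Ideal of a boolean algebra (as a set). -/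
def IsIdeal {B : Type*} [BooleanAlgebra B] (I : Set B) : Prop :=
  ⊥ ∈ I ∧ (∀ a b : B, a ≤ b → b ∈ I → a ∈ I) ∧ (∀ a b : B, a ∈ I → b ∈ I → a ⊔ b ∈ I)

/-- Round ideal: an ideal with `I = S⁻¹[I]`. -/
def IsRoundIdeal {B : Type*} [BooleanAlgebra B] (S : B → B → Prop) (I : Set B) : Prop :=
  IsIdeal I ∧ relPre S I = I

/-- The ideal generated by a set: intersection of all ideals containing it. -/
def idealGen {B : Type*} [BooleanAlgebra B] (X : Set B) : Set B :=
  ⋂₀ {J | IsIdeal J ∧ X ⊆ J}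

/-- The pseudocomplement of a round ideal: `I* = ¬S[U(I)]`. -/
def pstar {B : Type*} [BooleanAlgebra B] (S : B → B → Prop) (I : Set B) : Set B :=
  complSet (relImg S (upperBounds I))

/-- The well-inside relation on round ideals: `I ≺ J` iff `U(I) ∩ J ≠ ∅`. -/
def precR {B : Type*} [BooleanAlgebra B] (I J : Set B) : Prop :=
  (upperBounds I ∩ J).Nonempty

/-- Normal round ideal: a round ideal with `I = I**`. -/
def IsNormalRoundIdeal {B : Type*} [BooleanAlgebra B] (S : B → B → Prop) (I : Set B) : Prop :=
  IsRoundIdeal S I ∧ pstar S (pstar S I) = I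

/-- The dual of a subordination: `b T̃ a` iff `¬a T ¬b`. -/
def relDual {B₁ B₂ : Type*} [BooleanAlgebra B₁] [BooleanAlgebra B₂]
    (T : B₁ → B₂ → Prop) : B₂ → B₁ → Prop :=
  fun b a => T aᶜ bᶜ

/-- Continuity of a compatible subordination. -/
def IsContinuousSub {B₁ B₂ : Type*} [BooleanAlgebra B₁] [BooleanAlgebra B₂]
    (S₁ : B₁ → B₁ → Prop) (S₂ : B₂ → B₂ → Prop) (T : B₁ → B₂ → Prop) : Prop :=
  ∀ b₁ b₂, S₂ b₁ b₂ → ∃ a, relDual T b₁ a ∧ ∀ a', relDual T b₂ a' → S₁ a a'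

/-- Functional subordination: `T̃ ∘ T ⊆ S₁` and `S₂ ⊆ T ∘ T̃`. -/
def IsFunctionalSub {B₁ B₂ : Type*} [BooleanAlgebra B₁] [BooleanAlgebra B₂]
    (S₁ : B₁ → B₁ → Prop) (S₂ : B₂ → B₂ → Prop) (T : B₁ → B₂ → Prop) : Prop :=
  (∀ a a', relComp (relDual T) T a a' → S₁ a a') ∧
  (∀ b b', S₂ b b' → relComp T (relDual T) b b')

/-- round ideals are closed under binary intersections and under
joins (the ideal generated by a union of round ideals is round). -/
theorem stmt2 {B : Type*} [BooleanAlgebra B] (S : B → B → Prop) (hS : IsS5Sub S) :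
    (∀ I J : Set B, IsRoundIdeal S I → IsRoundIdeal S J → IsRoundIdeal S (I ∩ J)) ∧
    (∀ 𝒮 : Set (Set B), (∀ I ∈ 𝒮, IsRoundIdeal S I) →
      IsRoundIdeal S (idealGen (⋃₀ 𝒮))) := by
  constructor
  · rintro I J ⟨⟨hI0, hIdown, hIsup⟩, hIr⟩ ⟨⟨hJ0, hJdown, hJsup⟩, hJr⟩
    refine ⟨⟨⟨hI0, hJ0⟩, ?_, ?_⟩, ?_⟩
    · rintro a b hab ⟨hbI, hbJ⟩
      exact ⟨hIdown a b hab hbI, hJdown a b hab hbJ⟩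
    · rintro a b ⟨haI, haJ⟩ ⟨hbI, hbJ⟩
      exact ⟨hIsup a b haI hbI, hJsup a b haJ hbJ⟩
    · ext a
      constructor
      · rintro ⟨x, ⟨hxI, hxJ⟩, hax⟩
        have := hS.le_of_rel a x hax
        exact ⟨hIdown a x this hxI, hJdown a x this hxJ⟩
      · rintro ⟨haI, haJ⟩
        obtain ⟨b, hbI, hab⟩ : a ∈ relPre S I := by rw [hIr]; exact haI
        obtain ⟨c, hcJ, hac⟩ : a ∈ relPre S J := by rw [hJr]; exact haJ
        refine ⟨b ⊓ c, ⟨hIdown _ b inf_le_left hbI, hJdown _ c inf_le_right hcJ⟩, ?_⟩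
        exact hS.inf_right a b c hab hac
  · intro 𝒮 h𝒮
    have hGen : IsIdeal (idealGen (⋃₀ 𝒮)) := by
      refine ⟨?_, ?_, ?_⟩
      · intro J hJ
        exact hJ.1.1
      · intro a b hab hb J hJ
        exact hJ.1.2.1 a b hab (hb J hJ)
      · intro a b ha hb J hJ
        exact hJ.1.2.2 a b (ha J hJ) (hb J hJ)
    have hsub : ⋃₀ 𝒮 ⊆ idealGen (⋃₀ 𝒮) := fun x hx J hJ => hJ.2 hx
    refine ⟨hGen, ?_⟩
    apply Set.Subset.antisymm
    · rintro a ⟨x, hx, hax⟩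
      exact hGen.2.1 a x (hS.le_of_rel a x hax) hx
    · intro a ha
      have hK : IsIdeal (relPre S (idealGen (⋃₀ 𝒮))) := by
        refine ⟨⟨⊥, hGen.1, hS.rel_bot⟩, ?_, ?_⟩
        · rintro x y hxy ⟨c, hc, hyc⟩
          exact ⟨c, hc, hS.mono x y c c hxy hyc le_rfl⟩
        · rintro x y ⟨c, hc, hxc⟩ ⟨d, hd, hyd⟩
          refine ⟨c ⊔ d, hGen.2.2 c d hc hd, ?_⟩
          exact hS.sup_left x y (c ⊔ d) (hS.mono x x c (c ⊔ d) le_rfl hxc le_sup_left)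
            (hS.mono y y d (c ⊔ d) le_rfl hyd le_sup_right)
      have hKsub : ⋃₀ 𝒮 ⊆ relPre S (idealGen (⋃₀ 𝒮)) := by
        rintro x ⟨I, hI𝒮, hxI⟩
        obtain ⟨y, hyI, hxy⟩ : x ∈ relPre S I := by rw [(h𝒮 I hI𝒮).2]; exact hxI
        exact ⟨y, hsub ⟨I, hI𝒮, hyI⟩, hxy⟩
      exact ha _ ⟨hK, hKsub⟩
end

section
/- Let (B,S) be an S5-subordination algebra and I a round ideal. In the frame of round ideals, the pseudocomplement of I is I* = S⁻¹[¬U(I)] = ¬S[U(I)], where U(I) is the set of upper bounds of I. -/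
open Set

/-- the pseudocomplement of a round ideal `I` in the frame of round
ideals is `I* = S⁻¹[¬U(I)] = ¬S[U(I)]`: it is the largest round ideal whose
intersection with `I` is `{⊥}`. -/
theorem stmt3 {B : Type*} [BooleanAlgebra B] (S : B → B → Prop) (hS : IsS5Sub S)
    (I : Set B) (hI : IsRoundIdeal S I) :
    pstar S I = relPre S (complSet (upperBounds I)) ∧
    IsRoundIdeal S (pstar S I) ∧
    I ∩ pstar S I = {⊥} ∧
    (∀ J : Set B, IsRoundIdeal S J → I ∩ J = {⊥} → J ⊆ pstar S I) := by

  obtain ⟨⟨hIbot, hIdown, hIsup⟩, hIround⟩ := hI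
  -- membership characterizations
  have hmem : ∀ a, a ∈ pstar S I ↔ ∃ u ∈ upperBounds I, S u aᶜ := by
    intro a
    constructor
    · rintro ⟨y, ⟨u, hu, hSuy⟩, rfl⟩
      exact ⟨u, hu, by simpa using hSuy⟩
    · rintro ⟨u, hu, h⟩
      exact ⟨aᶜ, ⟨u, hu, h⟩, by simp⟩
  have heq : pstar S I = relPre S (complSet (upperBounds I)) := by
    ext a
    rw [hmem]
    constructor
    · rintro ⟨u, hu, h⟩
      exact ⟨uᶜ, ⟨u, hu, rfl⟩, by simpa using hS.compl_rel _ _ h⟩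
    · rintro ⟨x, ⟨u, hu, rfl⟩, h⟩
      exact ⟨u, hu, by simpa using hS.compl_rel _ _ h⟩
  have hbot : (⊥ : B) ∈ pstar S I := by
    rw [hmem]
    exact ⟨⊤, fun i _ => le_top, by simpa using hS.rel_top⟩
  have hdown : ∀ a b : B, a ≤ b → b ∈ pstar S I → a ∈ pstar S I := by
    intro a b hab hb
    rw [hmem] at hb ⊢
    obtain ⟨u, hu, h⟩ := hb
    exact ⟨u, hu, hS.mono _ _ _ _ le_rfl h (compl_le_compl hab)⟩
  have hideal : IsIdeal (pstar S I) := by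
    refine ⟨hbot, hdown, ?_⟩
    intro a b ha hb
    rw [hmem] at ha hb ⊢
    obtain ⟨u, hu, hua⟩ := ha
    obtain ⟨v, hv, hvb⟩ := hb
    refine ⟨u ⊓ v, fun i hi => le_inf (hu hi) (hv hi), ?_⟩
    have h1 : S (u ⊓ v) aᶜ := hS.mono _ _ _ _ inf_le_left hua le_rfl
    have h2 : S (u ⊓ v) bᶜ := hS.mono _ _ _ _ inf_le_right hvb le_rfl
    have := hS.inf_right _ _ _ h1 h2
    simpa [compl_sup] using this
  have hround : relPre S (pstar S I) = pstar S I := by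
    ext a
    constructor
    · rintro ⟨x, hx, hax⟩
      exact hdown a x (hS.le_of_rel _ _ hax) hx
    · intro ha
      rw [hmem] at ha
      obtain ⟨u, hu, h⟩ := ha
      have := hS.compl_rel _ _ h
      simp only [compl_compl] at this
      obtain ⟨c, hac, hcu⟩ := hS.dense _ _ this
      refine ⟨c, ?_, hac⟩
      rw [hmem]
      refine ⟨u, hu, by simpa using hS.compl_rel _ _ hcu⟩
  refine ⟨heq, ⟨hideal, hround⟩, ?_, ?_⟩
  · ext a
    simp only [Set.mem_inter_iff, Set.mem_singleton_iff]
    constructor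
    · rintro ⟨haI, haP⟩
      rw [hmem] at haP
      obtain ⟨u, hu, h⟩ := haP
      have h1 : a ≤ u := hu haI
      have h2 : a ≤ uᶜ := by simpa using compl_le_compl (hS.le_of_rel _ _ h)
      have : a ≤ u ⊓ uᶜ := le_inf h1 h2
      simpa using le_bot_iff.mp (by simpa using this)
    · rintro rfl
      exact ⟨hIbot, hbot⟩
  · intro J hJ hIJ a haJ
    obtain ⟨⟨_, hJdown, _⟩, hJround⟩ := hJ
    rw [← hJround] at haJ
    obtain ⟨b, hbJ, hab⟩ := haJ
    rw [hmem]
    refine ⟨bᶜ, ?_, by simpa using hS.compl_rel _ _ hab⟩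
    intro i hiI
    have h1 : i ⊓ b ∈ I := hIdown _ _ inf_le_left hiI
    have h2 : i ⊓ b ∈ J := hJdown _ _ inf_le_right hbJ
    have h3 : i ⊓ b = ⊥ := by
      have : i ⊓ b ∈ I ∩ J := ⟨h1, h2⟩
      rwa [hIJ] at this
    exact le_compl_iff_disjoint_right.mpr (disjoint_iff.mpr h3)
end

section
/- Let (B,S) be an S5-subordination algebra and I, J round ideals. Then I is well-inside J in the frame of round ideals (i.e., I* ∨ J is the whole frame's top, equivalently I* ∨ J = B) if and only if U(I) ∩ J ≠ ∅, where U(I) is the set of upper bounds of I. -/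
open Set

lemma pstar_mem {B : Type*} [BooleanAlgebra B] {S : B → B → Prop} {I : Set B} {u c : B}
    (hu : u ∈ upperBounds I) (huc : S u c) : cᶜ ∈ pstar S I :=
  ⟨c, ⟨u, hu, huc⟩, rfl⟩

lemma pstar_ideal {B : Type*} [BooleanAlgebra B] (S : B → B → Prop) (hS : IsS5Sub S)
    (I : Set B) : IsIdeal (pstar S I) := by
  refine ⟨?_, ?_, ?_⟩
  · have : (⊤ : B)ᶜ ∈ pstar S I := pstar_mem (fun x _ => le_top) hS.rel_top
    simpa using this
  · rintro a b hab ⟨c, ⟨u, hu, huc⟩, rfl⟩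
    have hca : c ≤ aᶜ := le_compl_comm.mp (by simpa using hab)
    have : S u aᶜ := hS.mono u u c aᶜ le_rfl huc hca
    exact compl_compl a ▸ pstar_mem hu this
  · rintro a b ⟨c, ⟨u, hu, huc⟩, rfl⟩ ⟨d, ⟨v, hv, hvd⟩, rfl⟩
    have huv : u ⊓ v ∈ upperBounds I := fun x hx => le_inf (hu hx) (hv hx)
    have h1 : S (u ⊓ v) c := hS.mono _ u c c inf_le_left huc le_rfl
    have h2 : S (u ⊓ v) d := hS.mono _ v d d inf_le_right hvd le_rfl
    have : (c ⊓ d)ᶜ ∈ pstar S I := pstar_mem huv (hS.inf_right _ _ _ h1 h2)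
    simpa [compl_inf] using this

/-- for round ideals, `I` is well inside `J` (i.e. `I* ∨ J = B`)
iff `U(I) ∩ J ≠ ∅`. -/
theorem stmt4 {B : Type*} [BooleanAlgebra B] (S : B → B → Prop) (hS : IsS5Sub S)
    (I J : Set B) (hI : IsRoundIdeal S I) (hJ : IsRoundIdeal S J) :
    idealGen (pstar S I ∪ J) = Set.univ ↔ (upperBounds I ∩ J).Nonempty := by
  have hJid := hI
  constructor
  · intro h
    set K : Set B := {y | ∃ a ∈ pstar S I, ∃ b ∈ J, y ≤ a ⊔ b} with hKdef
    have hPI := pstar_ideal S hS I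
    have hKid : IsIdeal K := by
      refine ⟨⟨⊥, hPI.1, ⊥, hJ.1.1, by simp⟩, ?_, ?_⟩
      · rintro x y hxy ⟨a, ha, b, hb, hy⟩
        exact ⟨a, ha, b, hb, hxy.trans hy⟩
      · rintro x y ⟨a, ha, b, hb, hx⟩ ⟨a', ha', b', hb', hy⟩
        exact ⟨a ⊔ a', hPI.2.2 _ _ ha ha', b ⊔ b', hJ.1.2.2 _ _ hb hb',
          sup_le (hx.trans (sup_le_sup le_sup_left le_sup_left))
            (hy.trans (sup_le_sup le_sup_right le_sup_right))⟩
    have hsub : pstar S I ∪ J ⊆ K := by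
      rintro x (hx | hx)
      · exact ⟨x, hx, ⊥, hJ.1.1, by simp⟩
      · exact ⟨⊥, hPI.1, x, hx, by simp⟩
    have htop : (⊤ : B) ∈ K := by
      have : (⊤ : B) ∈ idealGen (pstar S I ∪ J) := by rw [h]; trivial
      exact this K ⟨hKid, hsub⟩
    obtain ⟨a, ⟨c, ⟨u, hu, huc⟩, rfl⟩, b, hb, htop'⟩ := htop
    have heq : cᶜ ⊔ b = ⊤ := top_le_iff.mp htop'
    have hcb : c ≤ b := by
      have : c ⊓ (cᶜ ⊔ b) = c := by rw [heq, inf_top_eq]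
      calc c = c ⊓ (cᶜ ⊔ b) := this.symm
        _ = c ⊓ b := by rw [inf_sup_left]; simp
        _ ≤ b := inf_le_right
    have hub : u ≤ b := (hS.le_of_rel u c huc).trans hcb
    exact ⟨b, fun x hx => (hu hx).trans hub, hb⟩
  · rintro ⟨c, hcU, hcJ⟩
    obtain ⟨d, hdJ, hcd⟩ : c ∈ relPre S J := by rw [hJ.2]; exact hcJ
    have hdc : dᶜ ∈ pstar S I := pstar_mem hcU hcd
    ext x
    simp only [Set.mem_univ, iff_true]
    intro K hK
    obtain ⟨hKid, hKsub⟩ := hK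
    have h1 : dᶜ ∈ K := hKsub (Or.inl hdc)
    have h2 : d ∈ K := hKsub (Or.inr hdJ)
    have h3 : dᶜ ⊔ d ∈ K := hKid.2.2 _ _ h1 h2
    exact hKid.2.1 x _ (by simp) h3
end

section
/- Let (B,S) be an S5-subordination algebra. The frame of round ideals RI(B) is compact and regular: the top element B is a compact element, and every round ideal J is the join of the round ideals I well-inside J. -/
open Set

lemma finsetSup_mem_ideal {B : Type*} [BooleanAlgebra B] {J : Set B} (hJ : IsIdeal J)
    (F : Finset B) (hF : ↑F ⊆ J) : F.sup id ∈ J := by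
  classical
  induction F using Finset.induction_on with
  | empty => simpa using hJ.1
  | @insert a F ha ih =>
    rw [Finset.sup_insert]
    exact hJ.2.2 _ _ (hF (by simp)) (ih fun x hx => hF (by simp [hx]))

lemma idealGen_char {B : Type*} [BooleanAlgebra B] {X : Set B} {b : B}
    (hb : b ∈ idealGen X) : ∃ F : Finset B, ↑F ⊆ X ∧ b ≤ F.sup id := by
  classical
  have : b ∈ {c : B | ∃ F : Finset B, ↑F ⊆ X ∧ c ≤ F.sup id} := by
    apply hb
    refine ⟨⟨⟨∅, by simp, by simp⟩, fun a c hac ⟨F, hF, hc⟩ => ⟨F, hF, hac.trans hc⟩,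
      fun a c ⟨F, hF, ha⟩ ⟨G, hG, hc⟩ => ⟨F ∪ G, ?_, ?_⟩⟩, fun a ha => ⟨{a}, by simpa, by simp⟩⟩
    · rw [Finset.coe_union]; exact Set.union_subset hF hG
    · exact sup_le (ha.trans (Finset.sup_mono Finset.subset_union_left))
        (hc.trans (Finset.sup_mono Finset.subset_union_right))
  exact this

lemma subset_idealGen {B : Type*} [BooleanAlgebra B] {X : Set B} : X ⊆ idealGen X :=
  fun _ ha _ hJ => hJ.2 ha

lemma idealGen_subset {B : Type*} [BooleanAlgebra B] {X J : Set B} (hJ : IsIdeal J)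
    (hXJ : X ⊆ J) : idealGen X ⊆ J :=
  fun _ ha => ha J ⟨hJ, hXJ⟩

/-- the frame of round ideals is compact (the top is a compact
element) and regular (every round ideal is the join of the round ideals
well inside it). -/
theorem stmt5 {B : Type*} [BooleanAlgebra B] (S : B → B → Prop) (hS : IsS5Sub S) :
    (∀ 𝒮 : Set (Set B), (∀ I ∈ 𝒮, IsRoundIdeal S I) →
      idealGen (⋃₀ 𝒮) = Set.univ →
      ∃ 𝒯 ⊆ 𝒮, 𝒯.Finite ∧ idealGen (⋃₀ 𝒯) = Set.univ) ∧
    (∀ J : Set B, IsRoundIdeal S J →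
      J = idealGen (⋃₀ {I : Set B | IsRoundIdeal S I ∧ precR I J})) := by
  classical
  constructor
  · intro 𝒮 h𝒮 hgen
    have htop : (⊤ : B) ∈ idealGen (⋃₀ 𝒮) := by rw [hgen]; trivial
    obtain ⟨F, hF, hle⟩ := idealGen_char htop
    set g : B → Set B := fun f => if h : ∃ I ∈ 𝒮, f ∈ I then h.choose else ∅ with hg
    refine ⟨g '' ↑F, ?_, (F.finite_toSet.image g), ?_⟩
    · rintro _ ⟨f, hf, rfl⟩
      have h : ∃ I ∈ 𝒮, f ∈ I := by
        obtain ⟨I, hI, hfI⟩ := hF hf; exact ⟨I, hI, hfI⟩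
      simp only [hg, dif_pos h]
      exact h.choose_spec.1
    · apply Set.eq_univ_of_forall
      intro b
      intro J hJ
      have hFJ : ↑F ⊆ J := by
        intro f hf
        have h : ∃ I ∈ 𝒮, f ∈ I := by
          obtain ⟨I, hI, hfI⟩ := hF hf; exact ⟨I, hI, hfI⟩
        apply hJ.2
        refine ⟨g f, ⟨f, hf, rfl⟩, ?_⟩
        simp only [hg, dif_pos h]
        exact h.choose_spec.2
      have : F.sup id ∈ J := finsetSup_mem_ideal hJ.1 F hFJ
      exact hJ.1.2.1 b _ le_top (hJ.1.2.1 _ _ hle this)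
  · intro J hJ
    apply le_antisymm
    · intro b hb
      -- J round: b ∈ relPre S J
      have hb' : b ∈ relPre S J := by rw [hJ.2]; exact hb
      obtain ⟨c, hcJ, hbc⟩ := hb'
      set I : Set B := {x | S x c} with hI
      have hIideal : IsIdeal I := by
        refine ⟨hS.mono ⊥ ⊥ ⊥ c le_rfl hS.rel_bot bot_le,
          fun x y hxy hy => hS.mono x y c c hxy hy le_rfl,
          fun x y hx hy => hS.sup_left x y c hx hy⟩
      have hIround : IsRoundIdeal S I := by
        refine ⟨hIideal, Set.Subset.antisymm ?_ ?_⟩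
        · rintro x ⟨y, hy, hxy⟩
          exact hS.mono x x c c le_rfl (hS.mono x y c c (hS.le_of_rel x y hxy) hy le_rfl) le_rfl
        · intro x hx
          obtain ⟨d, hxd, hdc⟩ := hS.dense x c hx
          exact ⟨d, hdc, hxd⟩
      have hprec : precR I J := by
        refine ⟨c, ?_, hcJ⟩
        intro x hx
        exact hS.le_of_rel x c hx
      exact subset_idealGen ⟨I, ⟨hIround, hprec⟩, hbc⟩
    · apply idealGen_subset hJ.1
      rintro b ⟨I, ⟨hIround, u, huI, huJ⟩, hbI⟩
      exact hJ.1.2.1 b u (huI hbI) huJ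
end

section
/- Let T be a compatible subordination between S5-subordination algebras (B₁,S₁) and (B₂,S₂). Then the map I ↦ T⁻¹[I] from round ideals of B₂ to round ideals of B₁ is well defined and preserves directed joins and finite meets (i.e., is a preframe homomorphism). -/
open Set

/-- for a compatible subordination `T`, the map `I ↦ T⁻¹[I]` is a
well-defined preframe homomorphism between the frames of round ideals. -/
theorem stmt6 {B₁ B₂ : Type*} [BooleanAlgebra B₁] [BooleanAlgebra B₂]
    (S₁ : B₁ → B₁ → Prop) (S₂ : B₂ → B₂ → Prop)
    (hS₁ : IsS5Sub S₁) (hS₂ : IsS5Sub S₂)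
    (T : B₁ → B₂ → Prop) (hT : IsCompat S₁ S₂ T) :
    (∀ I : Set B₂, IsRoundIdeal S₂ I → IsRoundIdeal S₁ (relPre T I)) ∧
    relPre T (Set.univ : Set B₂) = Set.univ ∧
    (∀ I J : Set B₂, IsRoundIdeal S₂ I → IsRoundIdeal S₂ J →
      relPre T (I ∩ J) = relPre T I ∩ relPre T J) ∧
    (∀ 𝒮 : Set (Set B₂), 𝒮.Nonempty → DirectedOn (· ⊆ ·) 𝒮 →
      (∀ I ∈ 𝒮, IsRoundIdeal S₂ I) →
      relPre T (⋃₀ 𝒮) = ⋃₀ (relPre T '' 𝒮)) := by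
  obtain ⟨hTsub, hST, hTS⟩ := hT
  refine ⟨?_, ?_, ?_, ?_⟩
  · rintro I ⟨⟨hbot, hdown, hsup⟩, hround⟩
    refine ⟨⟨⟨⊥, hbot, hTsub.rel_bot⟩, ?_, ?_⟩, ?_⟩
    · rintro a b hab ⟨c, hc, hbc⟩
      exact ⟨c, hc, hTsub.mono a b c c hab hbc le_rfl⟩
    · rintro a b ⟨c, hc, hac⟩ ⟨d, hd, hbd⟩
      exact ⟨c ⊔ d, hsup c d hc hd, hTsub.sup_left a b (c ⊔ d)
        (hTsub.mono a a c (c ⊔ d) le_rfl hac le_sup_left)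
        (hTsub.mono b b d (c ⊔ d) le_rfl hbd le_sup_right)⟩
    · ext a
      constructor
      · rintro ⟨a', ⟨b, hb, ha'b⟩, haa'⟩
        have : relComp T S₁ a b := ⟨a', haa', ha'b⟩
        rw [hTS] at this
        exact ⟨b, hb, this⟩
      · rintro ⟨b, hb, hab⟩
        have : relComp T S₁ a b := by rw [hTS]; exact hab
        obtain ⟨a', haa', ha'b⟩ := this
        exact ⟨a', ⟨b, hb, ha'b⟩, haa'⟩
  · ext a
    simp only [Set.mem_univ, iff_true]
    exact ⟨⊤, trivial, hTsub.mono a ⊤ ⊤ ⊤ le_top hTsub.rel_top le_rfl⟩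
  · rintro I J ⟨⟨_, hIdown, _⟩, _⟩ ⟨⟨_, hJdown, _⟩, _⟩
    ext a
    constructor
    · rintro ⟨b, ⟨hbI, hbJ⟩, hab⟩
      exact ⟨⟨b, hbI, hab⟩, ⟨b, hbJ, hab⟩⟩
    · rintro ⟨⟨c, hc, hac⟩, ⟨d, hd, had⟩⟩
      exact ⟨c ⊓ d, ⟨hIdown _ c inf_le_left hc, hJdown _ d inf_le_right hd⟩,
        hTsub.inf_right a c d hac had⟩
  · rintro 𝒮 - - -
    ext a
    constructor
    · rintro ⟨b, hb, hab⟩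
      obtain ⟨I, hI, hbI⟩ := hb
      exact ⟨relPre T I, ⟨I, hI, rfl⟩, ⟨b, hbI, hab⟩⟩
    · rintro ⟨X, ⟨I, hI, rfl⟩, b, hbI, hab⟩
      exact ⟨b, ⟨I, hI, hbI⟩, hab⟩
end

section
/- Let L and M be compact regular frames and □ : L → M a preframe homomorphism. Define the relation T from the booleanization of M to the booleanization of L by b T a iff b ≺ □a (well-inside in M). Then T is a compatible subordination: it is a subordination relation satisfying ≺_L ∘ T = T = T ∘ ≺_M (restricting ≺ to the booleanizations). -/
open Set

/-- Pseudocomplement in a frame. -/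
def pc {L : Type*} [Order.Frame L] (a : L) : L := sSup {x | a ⊓ x = ⊥}

/-- The well-inside relation in a frame: `a ≺ b` iff `a* ⊔ b = ⊤`. -/
def wI {L : Type*} [Order.Frame L] (a b : L) : Prop := pc a ⊔ b = ⊤

/-- The booleanization of a frame: the set of its regular elements `a = a**`. -/
def Bool' (L : Type*) [Order.Frame L] : Set L := {a | pc (pc a) = a}

/-- A frame is regular if every element is the join of the elements well inside it. -/
def IsRegularFrame (L : Type*) [Order.Frame L] : Prop :=
  ∀ a : L, a = sSup {x | wI x a}

/-- A preframe homomorphism preserves finite meets and directed joins. -/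
def IsPreframeHom {L M : Type*} [Order.Frame L] [Order.Frame M] (f : L → M) : Prop :=
  f ⊤ = ⊤ ∧ (∀ a b : L, f (a ⊓ b) = f a ⊓ f b) ∧
    ∀ s : Set L, s.Nonempty → DirectedOn (· ≤ ·) s → f (sSup s) = sSup (f '' s)

/-- A frame homomorphism preserves arbitrary joins and finite meets. -/
def IsFrameHom {L M : Type*} [Order.Frame L] [Order.Frame M] (f : L → M) : Prop :=
  f ⊤ = ⊤ ∧ (∀ a b : L, f (a ⊓ b) = f a ⊓ f b) ∧
    ∀ s : Set L, f (sSup s) = sSup (f '' s)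

section Aux

variable {L : Type*} [Order.Frame L]

lemma inf_pc (a : L) : a ⊓ pc a = ⊥ := by
  apply le_antisymm _ bot_le
  rw [pc, inf_sSup_eq]
  exact iSup₂_le fun b hb => hb.le

lemma le_pc_iff {a x : L} : x ≤ pc a ↔ a ⊓ x = ⊥ :=
  ⟨fun h => le_antisymm (le_trans (inf_le_inf_left a h) (inf_pc a).le) bot_le,
   fun h => le_sSup h⟩

lemma pc_anti {a b : L} (h : a ≤ b) : pc b ≤ pc a :=
  sSup_le fun x hx => le_sSup (le_antisymm (le_trans (inf_le_inf_right x h) hx.le) bot_le)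

lemma le_pcpc (a : L) : a ≤ pc (pc a) :=
  le_pc_iff.mpr (by rw [inf_comm]; exact inf_pc a)

lemma pc3 (a : L) : pc (pc (pc a)) = pc a :=
  le_antisymm (pc_anti (le_pcpc a)) (le_pcpc (pc a))

lemma pc_bot : pc (⊥ : L) = ⊤ :=
  le_antisymm le_top (le_sSup (by simp))

lemma pc_sup (a b : L) : pc (a ⊔ b) = pc a ⊓ pc b := by
  refine le_antisymm (le_inf (pc_anti le_sup_left) (pc_anti le_sup_right)) ?_
  refine le_pc_iff.mpr (le_antisymm ?_ bot_le)
  rw [inf_sup_right]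
  apply sup_le
  · exact le_trans (inf_le_inf_left a inf_le_left) (inf_pc a).le
  · exact le_trans (inf_le_inf_left b inf_le_right) (inf_pc b).le

lemma wI_le {a b : L} (h : wI a b) : a ≤ b := by
  calc a = a ⊓ (pc a ⊔ b) := by rw [h, inf_top_eq]
    _ = (a ⊓ pc a) ⊔ (a ⊓ b) := inf_sup_left a _ _
    _ = a ⊓ b := by rw [inf_pc, bot_sup_eq]
    _ ≤ b := inf_le_right

lemma wI_mono {a b a' b' : L} (ha : a' ≤ a) (hb : b ≤ b') (h : wI a b) : wI a' b' :=
  top_le_iff.mp (h ▸ sup_le_sup (pc_anti ha) hb)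

lemma wI_bot (d : L) : wI ⊥ d := by
  rw [wI, pc_bot, top_sup_eq]

lemma wI_sup {a b d : L} (h1 : wI a d) (h2 : wI b d) : wI (a ⊔ b) d := by
  rw [wI, pc_sup, sup_inf_right, h1, h2, inf_top_eq]

lemma wI_inf_right {a b c : L} (h1 : wI a b) (h2 : wI a c) : wI a (b ⊓ c) := by
  rw [wI, sup_inf_left, h1, h2, inf_top_eq]

lemma nonempty_wI (d : L) : ({x | wI x d} : Set L).Nonempty := ⟨⊥, wI_bot d⟩

lemma directedOn_wI (d : L) : DirectedOn (· ≤ ·) {x : L | wI x d} :=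
  fun x hx y hy => ⟨x ⊔ y, wI_sup hx hy, le_sup_left, le_sup_right⟩

lemma box_mono {M : Type*} [Order.Frame M] {f : L → M} (hf : IsPreframeHom f)
    {a b : L} (h : a ≤ b) : f a ≤ f b := by
  have : f (a ⊓ b) = f a ⊓ f b := hf.2.1 a b
  rw [inf_eq_left.mpr h] at this
  exact this ▸ inf_le_right

/-- Key interpolation lemma using compactness, regularity and preservation of
directed joins. -/
lemma interp_box {M : Type*} [Order.Frame M]
    (hcM : IsCompactElement (⊤ : M)) (hrL : IsRegularFrame L)
    {f : L → M} (hf : IsPreframeHom f) {b : M} {a : L} (h : wI b (f a)) :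
    ∃ c : L, wI b (f c) ∧ wI c a := by
  set S : Set L := {y | wI y a} with hS
  have hfa : f a = sSup (f '' S) := by
    rw [← hf.2.2 S (nonempty_wI a) (directedOn_wI a), ← hrL a]
  set T : Set M := (fun y => pc b ⊔ f y) '' S with hT
  have hTne : T.Nonempty := ⟨_, ⟨⊥, wI_bot a, rfl⟩⟩
  have hTdir : DirectedOn (· ≤ ·) T := by
    rintro _ ⟨x, hx, rfl⟩ _ ⟨y, hy, rfl⟩
    exact ⟨pc b ⊔ f (x ⊔ y), ⟨x ⊔ y, wI_sup hx hy, rfl⟩,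
      sup_le_sup_left (box_mono hf le_sup_left) _,
      sup_le_sup_left (box_mono hf le_sup_right) _⟩
  have htop : (⊤ : M) ≤ sSup T := by
    have : pc b ⊔ f a ≤ sSup T := by
      apply sup_le
      · exact le_trans le_sup_left (le_sSup ⟨⊥, wI_bot a, rfl⟩)
      · rw [hfa]
        refine sSup_le ?_
        rintro _ ⟨y, hy, rfl⟩
        exact le_trans le_sup_right (le_sSup ⟨y, hy, rfl⟩)
    exact h ▸ this
  obtain ⟨_, ⟨y, hy, rfl⟩, hle⟩ :=
    (CompleteLattice.isCompactElement_iff_le_of_directed_sSup_le M ⊤).mp hcM T hTne hTdir htop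
  exact ⟨y, top_le_iff.mp hle, hy⟩

lemma id_preframe : IsPreframeHom (id : L → L) := by
  refine ⟨rfl, fun a b => rfl, fun s _ _ => ?_⟩
  rw [image_id]; rfl

end Aux

/-- for a preframe homomorphism `□ : L → M` between compact
regular frames, the relation `b T a` iff `b ≺ □a` is a compatible subordination
from the booleanization of `M` to the booleanization of `L`. -/
theorem stmt7 {L M : Type*} [Order.Frame L] [Order.Frame M]
    (hcL : IsCompactElement (⊤ : L)) (hrL : IsRegularFrame L)
    (hcM : IsCompactElement (⊤ : M)) (hrM : IsRegularFrame M)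
    (box : L → M) (hbox : IsPreframeHom box) :
    -- T is a subordination on the booleanizations (axioms S1–S4):
    wI (⊥ : M) (box ⊥) ∧
    wI (⊤ : M) (box ⊤) ∧
    (∀ b b' : M, b ∈ Bool' M → b' ∈ Bool' M → ∀ a : L, a ∈ Bool' L →
      wI b (box a) → wI b' (box a) → wI (pc (pc (b ⊔ b'))) (box a)) ∧
    (∀ b : M, b ∈ Bool' M → ∀ a a' : L, a ∈ Bool' L → a' ∈ Bool' L →
      wI b (box a) → wI b (box a') → wI b (box (a ⊓ a'))) ∧
    (∀ b b' : M, b ∈ Bool' M → b' ∈ Bool' M → ∀ a a' : L, a ∈ Bool' L → a' ∈ Bool' L →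
      b ≤ b' → wI b' (box a) → a ≤ a' → wI b (box a')) ∧
    -- compatibility: ≺ ∘ T = T = T ∘ ≺
    (∀ b : M, b ∈ Bool' M → ∀ a : L, a ∈ Bool' L →
      (wI b (box a) ↔ ∃ c ∈ Bool' M, wI b c ∧ wI c (box a))) ∧
    (∀ b : M, b ∈ Bool' M → ∀ a : L, a ∈ Bool' L →
      (wI b (box a) ↔ ∃ c ∈ Bool' L, wI b (box c) ∧ wI c a)) := by
  refine ⟨wI_bot _, ?_, ?_, ?_, ?_, ?_, ?_⟩
  · rw [wI, hbox.1, sup_top_eq]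
  · intro b b' _ _ a _ h1 h2
    rw [wI, pc3, pc_sup, sup_inf_right, h1, h2, inf_top_eq]
  · intro b _ a a' _ _ h1 h2
    rw [hbox.2.1]
    exact wI_inf_right h1 h2
  · intro b b' _ _ a a' _ _ hbb h haa
    exact wI_mono hbb (box_mono hbox haa) h
  · intro b _ a _
    constructor
    · intro h
      obtain ⟨c, h1, h2⟩ := interp_box hcM hrM id_preframe (f := (id : M → M)) h
      refine ⟨pc (pc c), pc3 (pc c), wI_mono le_rfl (le_pcpc c) h1, ?_⟩
      rw [wI, pc3]
      exact h2
    · rintro ⟨c, _, h1, h2⟩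
      exact wI_mono le_rfl (wI_le h2) h1
  · intro b _ a _
    constructor
    · intro h
      obtain ⟨c, h1, h2⟩ := interp_box hcM hrL hbox h
      refine ⟨pc (pc c), pc3 (pc c), wI_mono le_rfl (box_mono hbox (le_pcpc c)) h1, ?_⟩
      rw [wI, pc3]
      exact h2
    · rintro ⟨c, _, h1, h2⟩
      exact wI_mono le_rfl (box_mono hbox (wI_le h2)) h1
end

section
/- Let (B,S) be an S5-subordination algebra, a ∈ B, and J a round ideal. Then a ∈ J if and only if there exists a normal round ideal I (i.e., a round ideal with I = I**, double pseudocomplement in the frame of round ideals) such that a ∈ I and I is well-inside J (I ≺ J, equivalently U(I) ∩ J ≠ ∅). -/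
open Set

lemma mem_pstar {B : Type*} [BooleanAlgebra B] (S : B → B → Prop) (K : Set B) (a : B) :
    a ∈ pstar S K ↔ ∃ u ∈ upperBounds K, S u aᶜ := by
  constructor
  · rintro ⟨y, ⟨u, hu, hS⟩, rfl⟩
    exact ⟨u, hu, by simpa using hS⟩
  · rintro ⟨u, hu, hS⟩
    exact ⟨aᶜ, ⟨u, hu, hS⟩, compl_compl a⟩

lemma pstar_antitone {B : Type*} [BooleanAlgebra B] (S : B → B → Prop) {K L : Set B}
    (h : K ⊆ L) : pstar S L ⊆ pstar S K := by
  intro x hx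
  rw [mem_pstar] at hx ⊢
  obtain ⟨u, hu, hS⟩ := hx
  exact ⟨u, fun y hy => hu (h hy), hS⟩

lemma pstar_roundIdeal {B : Type*} [BooleanAlgebra B] {S : B → B → Prop} (hS : IsS5Sub S)
    (K : Set B) : IsRoundIdeal S (pstar S K) := by
  constructor
  · refine ⟨?_, ?_, ?_⟩
    · rw [mem_pstar]
      exact ⟨⊤, fun y _ => le_top, by simpa using hS.rel_top⟩
    · intro x y hxy hy
      rw [mem_pstar] at hy ⊢
      obtain ⟨u, hu, hrel⟩ := hy
      exact ⟨u, hu, hS.mono u u yᶜ xᶜ le_rfl hrel (compl_le_compl hxy)⟩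
    · intro x y hx hy
      rw [mem_pstar] at hx hy ⊢
      obtain ⟨u, hu, hru⟩ := hx
      obtain ⟨v, hv, hrv⟩ := hy
      refine ⟨u ⊓ v, fun z hz => le_inf (hu hz) (hv hz), ?_⟩
      rw [compl_sup]
      exact hS.inf_right _ _ _ (hS.mono _ u _ _ inf_le_left hru le_rfl)
        (hS.mono _ v _ _ inf_le_right hrv le_rfl)
  · ext x
    constructor
    · rintro ⟨y, hy, hxy⟩
      rw [mem_pstar] at hy ⊢
      obtain ⟨u, hu, hrel⟩ := hy
      refine ⟨u, hu, hS.mono u u yᶜ xᶜ le_rfl hrel ?_⟩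
      exact compl_le_compl (hS.le_of_rel _ _ hxy)
    · intro hx
      rw [mem_pstar] at hx
      obtain ⟨u, hu, hrel⟩ := hx
      obtain ⟨c, hc1, hc2⟩ := hS.dense _ _ hrel
      refine ⟨cᶜ, ?_, ?_⟩
      · rw [mem_pstar]
        exact ⟨u, hu, by simpa using hc1⟩
      · have := hS.compl_rel _ _ hc2
        simpa using this

lemma subset_pstar_pstar {B : Type*} [BooleanAlgebra B] {S : B → B → Prop} (hS : IsS5Sub S)
    {K : Set B} (hK : IsRoundIdeal S K) : K ⊆ pstar S (pstar S K) := by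
  intro x hx
  have hx' : x ∈ relPre S K := by rw [hK.2]; exact hx
  obtain ⟨x', hx', hrel⟩ := hx'
  rw [mem_pstar]
  refine ⟨x'ᶜ, ?_, hS.compl_rel _ _ hrel⟩
  rintro z hz
  rw [mem_pstar] at hz
  obtain ⟨u, hu, hrel'⟩ := hz
  have h1 : x' ≤ u := hu hx'
  have h2 : u ≤ zᶜ := hS.le_of_rel _ _ hrel'
  calc z ≤ x'ᶜ := by
        have : x' ≤ zᶜ := h1.trans h2
        simpa using compl_le_compl this

lemma pstar3 {B : Type*} [BooleanAlgebra B] {S : B → B → Prop} (hS : IsS5Sub S)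
    {K : Set B} (hK : IsRoundIdeal S K) :
    pstar S (pstar S (pstar S K)) = pstar S K :=
  le_antisymm (pstar_antitone S (subset_pstar_pstar hS hK))
    (subset_pstar_pstar hS (pstar_roundIdeal hS K))

/-- `a ∈ J` iff there is a normal round ideal `I` with `a ∈ I` and
`I ≺ J`. -/
theorem stmt8 {B : Type*} [BooleanAlgebra B] (S : B → B → Prop) (hS : IsS5Sub S)
    (a : B) (J : Set B) (hJ : IsRoundIdeal S J) :
    a ∈ J ↔ ∃ I : Set B, IsRoundIdeal S I ∧ pstar S (pstar S I) = I ∧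
      a ∈ I ∧ precR I J := by
  constructor
  · intro haJ
    -- roundness of J: get b ∈ J with S a b
    have haJ' : a ∈ relPre S J := by rw [hJ.2]; exact haJ
    obtain ⟨b, hbJ, hab⟩ := haJ'
    -- K = {x | S x b} is a round ideal
    set K : Set B := {x | S x b} with hKdef
    have hKideal : IsIdeal K := by
      refine ⟨hS.mono _ ⊥ ⊥ _ le_rfl hS.rel_bot bot_le, ?_, ?_⟩
      · intro x y hxy hy
        exact hS.mono x y b b hxy hy le_rfl
      · intro x y hx hy
        exact hS.sup_left x y b hx hy
    have hKround : IsRoundIdeal S K := by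
      refine ⟨hKideal, ?_⟩
      ext x
      constructor
      · rintro ⟨c, hc, hxc⟩
        exact hS.mono x c b b (hS.le_of_rel _ _ hxc) hc le_rfl
      · intro hx
        obtain ⟨c, hc1, hc2⟩ := hS.dense _ _ hx
        exact ⟨c, hc2, hc1⟩
    refine ⟨pstar S (pstar S K), pstar_roundIdeal hS _, ?_, ?_, ?_⟩
    · exact pstar3 hS (pstar_roundIdeal hS K)
    · exact subset_pstar_pstar hS hKround hab
    · -- precR: find upper bound of K** in J
      have hbJ' : b ∈ relPre S J := by rw [hJ.2]; exact hbJ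
      obtain ⟨d, hdJ, hbd⟩ := hbJ'
      refine ⟨d, ?_, hdJ⟩
      intro x hx
      rw [mem_pstar] at hx
      obtain ⟨u, hu, hrel⟩ := hx
      -- dᶜ ∈ K* since b ∈ U(K) and S b d
      have hdK : dᶜ ∈ pstar S K := by
        rw [mem_pstar]
        refine ⟨b, fun z hz => hS.le_of_rel _ _ hz, by simpa using hbd⟩
      have h1 : dᶜ ≤ u := hu hdK
      have h2 : u ≤ xᶜ := hS.le_of_rel _ _ hrel
      have : dᶜ ≤ xᶜ := h1.trans h2
      simpa using compl_le_compl this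
  · rintro ⟨I, hI, _, haI, c, hcU, hcJ⟩
    exact hJ.1.2.1 a c (hcU haI) hcJ
end

section
/- Let (B,S) be an S5-subordination algebra and I a round ideal. Then I is a normal round ideal (I = I**) if and only if I = S⁻¹[L(S[U(I)])], where U denotes upper bounds and L lower bounds. -/
open Set

lemma pstar_pstar_eq {B : Type*} [BooleanAlgebra B] (S : B → B → Prop) (hS : IsS5Sub S)
    (I : Set B) :
    pstar S (pstar S I) = relPre S (lowerBounds (relImg S (upperBounds I))) := by
  ext b
  simp only [pstar, complSet, relPre, relImg, Set.mem_image, Set.mem_setOf_eq]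
  constructor
  · rintro ⟨c, ⟨u, hu, hsc⟩, rfl⟩
    refine ⟨uᶜ, ?_, hS.compl_rel u c hsc⟩
    intro x hx
    have hxu : xᶜ ≤ u := hu ⟨x, hx, rfl⟩
    exact compl_le_iff_compl_le.mpr hxu
  · rintro ⟨l, hl, hbl⟩
    refine ⟨bᶜ, ⟨lᶜ, ?_, hS.compl_rel b l hbl⟩, compl_compl b⟩
    rintro y ⟨x, hx, rfl⟩
    exact compl_le_compl (hl hx)

/-- a round ideal `I` is normal (`I = I**`) iff
`I = S⁻¹[L(S[U(I)])]`. -/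
theorem stmt9 {B : Type*} [BooleanAlgebra B] (S : B → B → Prop) (hS : IsS5Sub S)
    (I : Set B) (hI : IsRoundIdeal S I) :
    pstar S (pstar S I) = I ↔
      I = relPre S (lowerBounds (relImg S (upperBounds I))) := by
  rw [pstar_pstar_eq S hS I]
  exact eq_comm
end

section
/- Let (B,S) be a de Vries algebra (a compingent algebra on a complete boolean algebra). Then the map ι : B → NI(B) sending b to S⁻¹[b] = {a | a S b} is a structure-preserving bijection: it is a boolean isomorphism onto the normal round ideals, and a S b if and only if ι(a) ≺ ι(b). -/
open Set

/-- for a de Vries algebra `(B,S)`, the map `ι b = S⁻¹[b]` is a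
structure-preserving bijection from `B` onto the normal round ideals:
an order isomorphism onto `NI(B)` with `a S b ↔ ι(a) ≺ ι(b)`. -/
theorem stmt13 {B : Type*} [CompleteBooleanAlgebra B] (S : B → B → Prop)
    (hS : IsS5Sub S)
    (h8 : ∀ a : B, a ≠ ⊥ → ∃ b : B, b ≠ ⊥ ∧ S b a) :
    (∀ b : B, IsNormalRoundIdeal S {a : B | S a b}) ∧
    (∀ a b : B, a ≤ b ↔ {x : B | S x a} ⊆ {x : B | S x b}) ∧
    (∀ I : Set B, IsNormalRoundIdeal S I → ∃ b : B, {x : B | S x b} = I) ∧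
    (∀ a b : B, S a b ↔ precR {x : B | S x a} {x : B | S x b}) := by
  -- compingentness: every element is the sup of elements subordinated to it
  have hsup : ∀ b : B, sSup {x : B | S x b} = b := by
    intro b
    refine le_antisymm (sSup_le fun x hx => hS.le_of_rel _ _ hx) ?_
    by_contra h
    set c := sSup {x : B | S x b} with hc
    have hne : b \ c ≠ ⊥ := fun h0 => h (sdiff_eq_bot_iff.mp h0)
    obtain ⟨d, hd0, hdS⟩ := h8 _ hne
    have hdb : S d b := hS.mono d d (b \ c) b le_rfl hdS sdiff_le
    have hdc : d ≤ c := le_sSup hdb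
    have hdc' : d ≤ b \ c := hS.le_of_rel _ _ hdS
    have hbot : d ≤ ⊥ := by
      have : d ≤ c ⊓ cᶜ := le_inf hdc (hdc'.trans (by rw [_root_.sdiff_eq]; exact inf_le_right))
      simpa using this
    exact hd0 (le_bot_iff.mp hbot)
  have hpstar : ∀ I : Set B, pstar S I = {y : B | S y (sSup I)ᶜ} := by
    intro I
    ext y
    simp only [pstar, complSet, relImg, mem_image, mem_setOf_eq]
    constructor
    · rintro ⟨x, ⟨u, hu, hux⟩, rfl⟩
      have h1 : S (sSup I) x := hS.mono _ u _ _ (sSup_le hu) hux le_rfl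
      exact hS.compl_rel _ _ h1
    · intro hy
      have h1 : S (sSup I) yᶜ := by
        have := hS.compl_rel _ _ hy
        simpa using this
      exact ⟨yᶜ, ⟨sSup I, fun x hx => le_sSup hx, h1⟩, compl_compl y⟩
  have hpp : ∀ I : Set B, pstar S (pstar S I) = {y : B | S y (sSup I)} := by
    intro I
    rw [hpstar, hpstar, hsup, compl_compl]
  refine ⟨?_, ?_, ?_, ?_⟩
  · intro b
    refine ⟨⟨⟨hS.mono ⊥ ⊥ ⊥ b le_rfl hS.rel_bot bot_le,
        fun x y hxy hy => hS.mono x y b b hxy hy le_rfl,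
        fun x y hx hy => hS.sup_left x y b hx hy⟩, ?_⟩, ?_⟩
    · ext a
      simp only [relPre, mem_setOf_eq]
      constructor
      · rintro ⟨x, hx, hax⟩
        exact hS.mono a a x b le_rfl hax (hS.le_of_rel _ _ hx)
      · intro hab
        obtain ⟨c, hac, hcb⟩ := hS.dense a b hab
        exact ⟨c, hcb, hac⟩
    · rw [hpp, hsup]
  · intro a b
    constructor
    · intro h x hx
      exact hS.mono x x a b le_rfl hx h
    · intro h
      rw [← hsup a, ← hsup b]
      exact sSup_le_sSup h
  · rintro I ⟨hround, hnorm⟩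
    exact ⟨sSup I, by rw [← hpp I, hnorm]⟩
  · intro a b
    constructor
    · intro hab
      obtain ⟨c, hac, hcb⟩ := hS.dense a b hab
      exact ⟨c, fun x hx => (hS.le_of_rel _ _ hx).trans (hS.le_of_rel _ _ hac), hcb⟩
    · rintro ⟨u, hu, hub⟩
      have : a ≤ u := by rw [← hsup a]; exact sSup_le hu
      exact hS.mono a u b b this hub le_rfl
end

section
/- Let T : (B₁,S₁) → (B₂,S₂) be a compatible subordination between S5-subordination algebras. The following are equivalent: (1) for all b₁ S₂ b₂ there is a with b₁ T̃ a and T̃[b₂] ⊆ S₁[a]; (2) for all b₁ S₂ b₂ there is a with b₁ T̃ a and a a lower bound of T̃[b₂]; (3) for all b₁ S₂ b₂ there is a ∈ T⁻¹[b₂] which is an upper bound of T⁻¹[b₁]. Here T̃ is defined by b T̃ a iff ¬a T ¬b. -/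
open Set

/-- equivalent formulations of continuity of a compatible
subordination `T : (B₁,S₁) → (B₂,S₂)`. -/
theorem stmt15 {B₁ B₂ : Type*} [BooleanAlgebra B₁] [BooleanAlgebra B₂]
    (S₁ : B₁ → B₁ → Prop) (S₂ : B₂ → B₂ → Prop)
    (hS₁ : IsS5Sub S₁) (hS₂ : IsS5Sub S₂)
    (T : B₁ → B₂ → Prop) (hT : IsCompat S₁ S₂ T) :
    ((∀ b₁ b₂ : B₂, S₂ b₁ b₂ →
        ∃ a : B₁, relDual T b₁ a ∧ ∀ a' : B₁, relDual T b₂ a' → S₁ a a') ↔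
     (∀ b₁ b₂ : B₂, S₂ b₁ b₂ →
        ∃ a : B₁, relDual T b₁ a ∧ a ∈ lowerBounds {a' : B₁ | relDual T b₂ a'})) ∧
    ((∀ b₁ b₂ : B₂, S₂ b₁ b₂ →
        ∃ a : B₁, relDual T b₁ a ∧ a ∈ lowerBounds {a' : B₁ | relDual T b₂ a'}) ↔
     (∀ b₁ b₂ : B₂, S₂ b₁ b₂ →
        ∃ a : B₁, T a b₂ ∧ a ∈ upperBounds {a' : B₁ | T a' b₁})) := by
  obtain ⟨hTs, hcomp2, hcomp1⟩ := hT
  constructor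
  · constructor
    · intro h b₁ b₂ hb
      obtain ⟨a, ha, h'⟩ := h b₁ b₂ hb
      exact ⟨a, ha, fun a' ha' => hS₁.le_of_rel _ _ (h' a' ha')⟩
    · intro h b₁ b₂ hb
      obtain ⟨a, ha, hlb⟩ := h b₁ b₂ hb
      have ha' : T aᶜ b₁ᶜ := ha
      rw [← hcomp1] at ha'
      obtain ⟨z, hz1, hz2⟩ := ha'
      refine ⟨zᶜ, ?_, ?_⟩
      · show T zᶜᶜ b₁ᶜ
        rw [compl_compl]; exact hz2
      · intro a' ha'
        have hza : S₁ zᶜ a := by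
          have := hS₁.compl_rel _ _ hz1
          rwa [compl_compl] at this
        exact hS₁.mono _ _ _ _ le_rfl hza (hlb ha')
  · constructor
    · intro h b₁ b₂ hb
      obtain ⟨a, ha, hlb⟩ := h b₂ᶜ b₁ᶜ (hS₂.compl_rel _ _ hb)
      have ha' : T aᶜ b₂ := by
        have : T aᶜ b₂ᶜᶜ := ha
        rwa [compl_compl] at this
      refine ⟨aᶜ, ha', ?_⟩
      intro a' ha2
      have h3 : relDual T b₁ᶜ a'ᶜ := by
        show T a'ᶜᶜ b₁ᶜᶜ
        rwa [compl_compl, compl_compl]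
      exact le_compl_comm.mp (hlb h3)
    · intro h b₁ b₂ hb
      obtain ⟨a, ha, hub⟩ := h b₂ᶜ b₁ᶜ (hS₂.compl_rel _ _ hb)
      refine ⟨aᶜ, ?_, ?_⟩
      · show T aᶜᶜ b₁ᶜ
        rwa [compl_compl]
      · intro a' ha2
        have h3 : a'ᶜ ≤ a := hub (show T a'ᶜ b₂ᶜ from ha2)
        calc aᶜ ≤ a'ᶜᶜ := compl_le_compl h3
        _ = a' := compl_compl _
end

section
/- Let T₁ : (B₁,S₁) → (B₂,S₂) and T₂ : (B₂,S₂) → (B₃,S₃) be continuous compatible subordinations between S5-subordination algebras. Then the relational composition T₂ ∘ T₁ : (B₁,S₁) → (B₃,S₃) is a continuous compatible subordination. Moreover, the identity S : (B,S) → (B,S) is continuous. -/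
open Set

/-- the composition of continuous compatible subordinations is a
continuous compatible subordination, and the identity `S : (B,S) → (B,S)` is
continuous. -/
theorem stmt16 {B₁ B₂ B₃ : Type*}
    [BooleanAlgebra B₁] [BooleanAlgebra B₂] [BooleanAlgebra B₃]
    (S₁ : B₁ → B₁ → Prop) (S₂ : B₂ → B₂ → Prop) (S₃ : B₃ → B₃ → Prop)
    (hS₁ : IsS5Sub S₁) (hS₂ : IsS5Sub S₂) (hS₃ : IsS5Sub S₃)
    (T₁ : B₁ → B₂ → Prop) (T₂ : B₂ → B₃ → Prop)
    (hT₁ : IsCompat S₁ S₂ T₁) (hT₂ : IsCompat S₂ S₃ T₂)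
    (hc₁ : IsContinuousSub S₁ S₂ T₁) (hc₂ : IsContinuousSub S₂ S₃ T₂) :
    IsCompat S₁ S₃ (relComp T₂ T₁) ∧
    IsContinuousSub S₁ S₃ (relComp T₂ T₁) ∧
    (∀ {B : Type*} [BooleanAlgebra B] (S : B → B → Prop),
      IsS5Sub S → IsContinuousSub S S S) := by
  classical
  obtain ⟨hsub₁, hST₁, hTS₁⟩ := hT₁
  obtain ⟨hsub₂, hST₂, hTS₂⟩ := hT₂
  refine ⟨⟨?_, ?_, ?_⟩, ?_, ?_⟩
  · -- IsSubord of composition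
    constructor
    · exact ⟨⊥, hsub₁.rel_bot, hsub₂.rel_bot⟩
    · exact ⟨⊤, hsub₁.rel_top, hsub₂.rel_top⟩
    · rintro a b c ⟨m, h1, h2⟩ ⟨n, h3, h4⟩
      refine ⟨m ⊔ n, hsub₁.sup_left _ _ _ (hsub₁.mono a a m (m ⊔ n) le_rfl h1 le_sup_left)
        (hsub₁.mono b b n (m ⊔ n) le_rfl h3 le_sup_right), hsub₂.sup_left _ _ _ h2 h4⟩
    · rintro a c d ⟨m, h1, h2⟩ ⟨n, h3, h4⟩
      refine ⟨m ⊓ n, hsub₁.inf_right _ _ _ h1 h3,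
        hsub₂.inf_right _ _ _ (hsub₂.mono (m ⊓ n) m c c inf_le_left h2 le_rfl)
          (hsub₂.mono (m ⊓ n) n d d inf_le_right h4 le_rfl)⟩
    · rintro a b c d hab ⟨m, h1, h2⟩ hcd
      exact ⟨m, hsub₁.mono a b m m hab h1 le_rfl, hsub₂.mono m m c d le_rfl h2 hcd⟩
  · -- S₃ ∘ (T₂ ∘ T₁) = T₂ ∘ T₁
    funext a c
    apply propext
    constructor
    · rintro ⟨x, ⟨m, h1, h2⟩, h3⟩
      have : relComp S₃ T₂ m c := ⟨x, h2, h3⟩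
      rw [hST₂] at this
      exact ⟨m, h1, this⟩
    · rintro ⟨m, h1, h2⟩
      have h2' : relComp S₃ T₂ m c := by rw [hST₂]; exact h2
      obtain ⟨x, hx1, hx2⟩ := h2'
      exact ⟨x, ⟨m, h1, hx1⟩, hx2⟩
  · -- (T₂ ∘ T₁) ∘ S₁ = T₂ ∘ T₁
    funext a c
    apply propext
    constructor
    · rintro ⟨x, h1, m, h2, h3⟩
      have : relComp T₁ S₁ a m := ⟨x, h1, h2⟩
      rw [hTS₁] at this
      exact ⟨m, this, h3⟩
    · rintro ⟨m, h1, h2⟩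
      have h1' : relComp T₁ S₁ a m := by rw [hTS₁]; exact h1
      obtain ⟨x, hx1, hx2⟩ := h1'
      exact ⟨x, hx1, m, hx2, h2⟩
  · -- continuity of the composition
    intro b₁ b₂ hb
    obtain ⟨a₂, ha₂, ha₂'⟩ := hc₂ b₁ b₂ hb
    -- ha₂ : T₂ a₂ᶜ b₁ᶜ
    have h1 : relComp T₂ S₂ a₂ᶜ b₁ᶜ := by rw [hTS₂]; exact ha₂
    obtain ⟨n, hn1, hn2⟩ := h1
    -- hn1 : S₂ a₂ᶜ n, hn2 : T₂ n b₁ᶜ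
    have hca : S₂ nᶜ a₂ := by
      have := hS₂.compl_rel _ _ hn1
      simpa using this
    obtain ⟨a, ha, ha'⟩ := hc₁ nᶜ a₂ hca
    refine ⟨a, ⟨nᶜᶜ, ?_, ?_⟩, ?_⟩
    · exact ha
    · simpa using hn2
    · rintro a' ⟨m', hm1, hm2⟩
      -- hm1 : T₁ a'ᶜ m', hm2 : T₂ m' b₂ᶜ
      have hdual : relDual T₂ b₂ m'ᶜ := by simpa [relDual] using hm2
      have hS2 : S₂ a₂ m'ᶜ := ha₂' _ hdual
      have hS2' : S₂ m'ᶜᶜ a₂ᶜ := hS₂.compl_rel _ _ hS2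
      have : relComp S₂ T₁ a'ᶜ a₂ᶜ := ⟨m', hm1, by simpa using hS2'⟩
      rw [hST₁] at this
      exact ha' a' this
  · -- identity continuity
    intro B _ S hS b₁ b₂ hb
    obtain ⟨c, hc1, hc2⟩ := hS.dense _ _ hb
    refine ⟨c, ?_, ?_⟩
    · exact hS.compl_rel _ _ hc1
    · intro a' ha'
      have : S b₂ a' := by simpa using hS.compl_rel _ _ ha'
      exact hS.mono c c b₂ a' le_rfl hc2 (hS.le_of_rel _ _ this)
end

section
/- Let T : (B₁,S₁) → (B₂,S₂) be a compatible subordination between S5-subordination algebras. Then T is functional (meaning T̃ ∘ T ⊆ S₁ and S₂ ⊆ T ∘ T̃, where b T̃ a iff ¬a T ¬b) if and only if: (a) a T 0 implies a = 0; and (b) whenever a T (b₁ ∨ b₂), b₁ S₂ b₁′, and b₂ S₂ b₂′, there exist a₁, a₂ ∈ B₁ with a S₁ (a₁ ∨ a₂), a₁ T b₁′, and a₂ T b₂′ — given that condition (a) is equivalent to T̃ ∘ T ⊆ S₁. -/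
open Set

/-- a compatible subordination `T` is functional iff (a) `a T 0`
implies `a = 0`, and (b) the splitting condition for joins holds; given the
known fact that `T̃ ∘ T ⊆ S₁` is equivalent to (a). -/
theorem stmt17 {B₁ B₂ : Type*} [BooleanAlgebra B₁] [BooleanAlgebra B₂]
    (S₁ : B₁ → B₁ → Prop) (S₂ : B₂ → B₂ → Prop)
    (hS₁ : IsS5Sub S₁) (hS₂ : IsS5Sub S₂)
    (T : B₁ → B₂ → Prop) (hT : IsCompat S₁ S₂ T)
    (hknown : (∀ a a' : B₁, relComp (relDual T) T a a' → S₁ a a') ↔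
      (∀ a : B₁, T a ⊥ → a = ⊥)) :
    IsFunctionalSub S₁ S₂ T ↔
      ((∀ a : B₁, T a ⊥ → a = ⊥) ∧
       (∀ (a : B₁) (b₁ b₂ b₁' b₂' : B₂), T a (b₁ ⊔ b₂) → S₂ b₁ b₁' → S₂ b₂ b₂' →
         ∃ a₁ a₂ : B₁, S₁ a (a₁ ⊔ a₂) ∧ T a₁ b₁' ∧ T a₂ b₂')) := by
  obtain ⟨hTsub, hcomp1, hcomp2⟩ := hT
  constructor
  · rintro ⟨h1, h2⟩
    refine ⟨hknown.mp h1, ?_⟩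
    intro a b₁ b₂ b₁' b₂' hab hb1 hb2
    obtain ⟨a₁, hd1, ht1⟩ := h2 b₁ b₁' hb1
    obtain ⟨a₂, hd2, ht2⟩ := h2 b₂ b₂' hb2
    refine ⟨a₁, a₂, ?_, ht1, ht2⟩
    apply h1
    refine ⟨b₁ ⊔ b₂, hab, ?_⟩
    have h1' : T (a₁ ⊔ a₂)ᶜ b₁ᶜ := hTsub.mono _ _ _ _ (compl_le_compl le_sup_left) hd1 le_rfl
    have h2' : T (a₁ ⊔ a₂)ᶜ b₂ᶜ := hTsub.mono _ _ _ _ (compl_le_compl le_sup_right) hd2 le_rfl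
    have h3 := hTsub.inf_right _ _ _ h1' h2'
    show T (a₁ ⊔ a₂)ᶜ (b₁ ⊔ b₂)ᶜ
    simpa [compl_sup] using h3
  · rintro ⟨ha, hb⟩
    refine ⟨hknown.mpr ha, ?_⟩
    intro b b' hbb'
    obtain ⟨e, he1, he2⟩ := hS₂.dense _ _ hbb'
    have htop : T ⊤ (e ⊔ eᶜ) := by
      have := hTsub.rel_top
      simpa using this
    obtain ⟨a₁, a₂, hs, ht1, ht2⟩ := hb ⊤ e eᶜ b' bᶜ htop he2 (hS₂.compl_rel _ _ he1)
    have hle : a₂ᶜ ≤ a₁ := by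
      have h := hS₁.le_of_rel _ _ hs
      have h2 : a₁ ⊔ a₂ = ⊤ := top_le_iff.mp (le_trans le_top h)
      calc a₂ᶜ = a₂ᶜ ⊓ (a₁ ⊔ a₂) := by rw [h2, inf_top_eq]
        _ = a₂ᶜ ⊓ a₁ := by rw [inf_sup_left, compl_inf_eq_bot, sup_bot_eq]
        _ ≤ a₁ := inf_le_right
    refine ⟨a₂ᶜ, ?_, ?_⟩
    · show T a₂ᶜᶜ bᶜ
      simpa using ht2
    · exact hTsub.mono _ _ _ _ hle ht1 le_rfl
end
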